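/- Let U ⊆ ℂ ≅ ℝ² be open and connected, let N ≥ 1, and let Y : U → ℝ^N be continuously differentiable with Y(p) ≠ 0 for every p ∈ U. Suppose there exist functions r, s : U → ℝ such that at every point of U the partial derivatives satisfy ∂Y/∂x = r·Y and ∂Y/∂y = s·Y. Then the direction of Y is constant: there exist a vector v ∈ ℝ^N and a function c : U → ℝ with c(p) ≠ 0 for all p ∈ U such that Y(p) = c(p)·v for every p ∈ U. -/

import Mathlib

open Matrix

noncomputable section

/-- a nowhere-vanishing C¹ map `Y : U → ℝ^N` on an open connected set `U ⊆ ℂ ≅ ℝ²`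
whose partial derivatives satisfy `∂Y/∂x = r·Y` and `∂Y/∂y = s·Y` has constant direction:
`Y = c·v` for a fixed vector `v` and a nowhere-vanishing scalar function `c`. -/
theorem stmt18 (U : Set ℂ) (hU : IsOpen U) (hUconn : IsConnected U)
    (N : ℕ) (hN : 1 ≤ N) (Y : ℂ → (Fin N → ℝ))
    (hY1 : ContDiffOn ℝ 1 Y U)
    (hY0 : ∀ p ∈ U, Y p ≠ 0)
    (r s : ℂ → ℝ)
    (hx : ∀ p ∈ U, fderiv ℝ Y p 1 = r p • Y p)
    (hy : ∀ p ∈ U, fderiv ℝ Y p Complex.I = s p • Y p) :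
    ∃ (v : Fin N → ℝ) (c : ℂ → ℝ), (∀ p ∈ U, c p ≠ 0) ∧ ∀ p ∈ U, Y p = c p • v := by
  obtain ⟨p₀, hp₀⟩ := hUconn.nonempty
  set v : Fin N → ℝ := Y p₀ with hv
  have hYd : ∀ q ∈ U, DifferentiableAt ℝ Y q := fun q hq =>
    (hY1.differentiableOn one_ne_zero).differentiableAt (hU.mem_nhds hq)
  -- Key local lemma: near each point, Y stays in the line spanned by its value there.
  have key : ∀ p ∈ U, ∀ᶠ q in nhds p, Y q ∈ Submodule.span ℝ {Y p} := by
    intro p hp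
    obtain ⟨j, hj⟩ : ∃ j, Y p j ≠ 0 := by
      by_contra h; push_neg at h; exact hY0 p hp (funext h)
    have hcj : ContinuousAt (fun q => Y q j) p :=
      (continuous_apply j).continuousAt.comp (hYd p hp).continuousAt
    have hne : ∀ᶠ q in nhds p, Y q j ≠ 0 := hcj.eventually_ne hj
    obtain ⟨ε, hε, hball⟩ := Metric.eventually_nhds_iff_ball.mp (hne.and (hU.mem_nhds hp))
    have hconst : ∀ i, ∀ q ∈ Metric.ball p ε, Y q i / Y q j = Y p i / Y p j := by
      intro i q hq
      have hdiff : ∀ z ∈ Metric.ball p ε, HasFDerivAt (fun q => Y q i * (Y q j)⁻¹)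
          (0 : ℂ →L[ℝ] ℝ) z := by
        intro z hz
        obtain ⟨hzj, hzU⟩ := hball z hz
        have hD : HasFDerivAt Y (fderiv ℝ Y z) z := (hYd z hzU).hasFDerivAt
        have hi : HasFDerivAt (fun q => Y q i)
            ((ContinuousLinearMap.proj i).comp (fderiv ℝ Y z)) z := by
          exact (ContinuousLinearMap.proj (R := ℝ) (φ := fun _ : Fin N => ℝ)
            i).hasFDerivAt.comp z hD
        have hjd : HasFDerivAt (fun q => Y q j)
            ((ContinuousLinearMap.proj j).comp (fderiv ℝ Y z)) z := by
          exact (ContinuousLinearMap.proj (R := ℝ) (φ := fun _ : Fin N => ℝ)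
            j).hasFDerivAt.comp z hD
        have hinv : HasFDerivAt (fun q => (Y q j)⁻¹)
            ((-(Y z j ^ 2)⁻¹) • (ContinuousLinearMap.proj j).comp (fderiv ℝ Y z)) z := by
          exact (hasDerivAt_inv hzj).comp_hasFDerivAt z hjd
        have hdv := hi.mul hinv
        have h0 : ((fun q => Y q i) z • ((-(Y z j ^ 2)⁻¹) •
              (ContinuousLinearMap.proj j).comp (fderiv ℝ Y z)) +
            (fun q => (Y q j)⁻¹) z • (ContinuousLinearMap.proj i).comp (fderiv ℝ Y z))
            = (0 : ℂ →L[ℝ] ℝ) := by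
          ext w
          have hw : w = w.re • (1 : ℂ) + w.im • Complex.I := by
            simp [Complex.real_smul, Complex.re_add_im]
          have hDw : fderiv ℝ Y z w = (w.re * r z + w.im * s z) • Y z := by
            conv_lhs => rw [hw]
            rw [map_add, ContinuousLinearMap.map_smul, ContinuousLinearMap.map_smul, hx z hzU, hy z hzU]
            ext k
            simp [smul_smul]
            ring
          simp only [ContinuousLinearMap.sub_apply, ContinuousLinearMap.smul_apply,
            ContinuousLinearMap.comp_apply, ContinuousLinearMap.proj_apply, hDw,
            ContinuousLinearMap.add_apply,
            Pi.smul_apply, smul_eq_mul, ContinuousLinearMap.zero_apply]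
          field_simp
          ring
        rwa [h0] at hdv
      have := Convex.is_const_of_fderivWithin_eq_zero (𝕜 := ℝ) (convex_ball p ε)
        (fun z hz => ((hdiff z hz).differentiableAt).differentiableWithinAt)
        (fun z hz => ((hdiff z hz).hasFDerivWithinAt.fderivWithin
          (Metric.isOpen_ball.uniqueDiffOn z hz)).trans rfl)
        hq (Metric.mem_ball_self hε)
      rw [div_eq_mul_inv, div_eq_mul_inv]
      exact this
    refine Metric.eventually_nhds_iff_ball.mpr ⟨ε, hε, fun q hq => ?_⟩
    refine Submodule.mem_span_singleton.mpr ⟨Y q j / Y p j, ?_⟩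
    ext i
    have h1 := hconst i q hq
    have hqj := (hball q hq).1
    rw [div_eq_div_iff hqj hj] at h1
    have : (Y q j / Y p j) * Y p i = Y q i := by
      field_simp
      linarith [h1]
    simpa [Pi.smul_apply, smul_eq_mul] using this
  -- Clopen argument on the connected set U.
  set S : Set ℂ := {p | p ∈ U ∧ Y p ∈ Submodule.span ℝ {v}} with hS
  have hSopen : IsOpen S := by
    rw [isOpen_iff_mem_nhds]
    intro p hp
    have hspan : Submodule.span ℝ {Y p} ≤ Submodule.span ℝ {v} := by
      rw [Submodule.span_le, Set.singleton_subset_iff]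
      exact hp.2
    filter_upwards [key p hp.1, hU.mem_nhds hp.1] with q hq hqU
    exact ⟨hqU, hspan hq⟩
  have hsub : U ⊆ S := by
    apply hUconn.isPreconnected.subset_of_closure_inter_subset hSopen
      ⟨p₀, hp₀, hp₀, Submodule.mem_span_singleton_self v⟩
    rintro q ⟨hqc, hqU⟩
    refine ⟨hqU, ?_⟩
    have h1 : Y q ∈ closure (Y '' S) :=
      (hYd q hqU).continuousAt.continuousWithinAt.mem_closure_image hqc
    have h2 : closure (Y '' S) ⊆ (Submodule.span ℝ {v} : Set (Fin N → ℝ)) := by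
      apply closure_minimal
      · rintro _ ⟨z, hz, rfl⟩; exact hz.2
      · exact (Submodule.span ℝ {v}).closed_of_finiteDimensional
    exact h2 h1
  obtain ⟨j₀, hj₀⟩ : ∃ j, v j ≠ 0 := by
    by_contra h; push_neg at h; exact hY0 p₀ hp₀ (funext h)
  refine ⟨v, fun p => Y p j₀ / v j₀, ?_, ?_⟩
  · intro p hp hc
    obtain ⟨t, ht⟩ := Submodule.mem_span_singleton.mp (hsub hp).2
    have htj : Y p j₀ = t * v j₀ := by rw [← ht]; simp
    have ht0 : t = 0 := by
      field_simp [htj, hj₀] at hc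
      rw [htj, mul_zero] at hc
      exact (mul_eq_zero.mp hc).resolve_right hj₀
    exact hY0 p hp (by rw [← ht, ht0, zero_smul])
  · intro p hp
    obtain ⟨t, ht⟩ := Submodule.mem_span_singleton.mp (hsub hp).2
    have htj : Y p j₀ = t * v j₀ := by rw [← ht]; simp
    have : Y p j₀ / v j₀ = t := by rw [htj]; field_simp
    show Y p = (Y p j₀ / v j₀) • v
    rw [this, ht]
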